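/- Let C ∈ [0,1] and let h(C) = 1/3 if C < 2/3 and h(C) = C/2 if C ≥ 2/3. Let ρ_MEMS be the maximally entangled mixed state: the 4×4 matrix (indexed by {0,1,2,3}, identifying (i,j) ∈ Fin 2 × Fin 2 with 2i+j) with diagonal (h(C), 1−2h(C), 0, h(C)), with ρ₀₃ = ρ₃₀ = C/2, and all other entries zero. Then I₂(ρ_MEMS) = 2C; consequently ρ_MEMS violates the imaginarity steering inequality, I₂(ρ_MEMS) > √2, if and only if C > 1/√2. -/

import Mathlib

open Matrix Kronecker
open scoped ComplexOrder

/-- Trace norm of a square complex matrix: `Tr[sqrt(Aᴴ A)]`. -/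
noncomputable def traceNorm {n : Type*} [Fintype n] [DecidableEq n]
    (A : Matrix n n ℂ) : ℝ :=
  (((Matrix.posSemidef_conjTranspose_mul_self A).1.eigenvectorUnitary : Matrix n n ℂ) *
    diagonal (((↑) : ℝ → ℂ) ∘ (√·) ∘ (Matrix.posSemidef_conjTranspose_mul_self A).1.eigenvalues) *
    (star (Matrix.posSemidef_conjTranspose_mul_self A).1.eigenvectorUnitary : Matrix n n ℂ)).trace.re

/-- Robustness of imaginarity: `(1/2) ‖ρ - ρᵀ‖₁`. -/
noncomputable def roi {n : Type*} [Fintype n] [DecidableEq n]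
    (ρ : Matrix n n ℂ) : ℝ :=
  (1 / 2) * traceNorm (ρ - ρ.transpose)
def σx : Matrix (Fin 2) (Fin 2) ℂ := !![0, 1; 1, 0]
def σy : Matrix (Fin 2) (Fin 2) ℂ := !![0, -Complex.I; Complex.I, 0]
def σz : Matrix (Fin 2) (Fin 2) ℂ := !![1, 0; 0, -1]
/-- Hadamard matrix (x-basis change). -/
noncomputable def Hm : Matrix (Fin 2) (Fin 2) ℂ :=
  (Real.sqrt 2 : ℂ)⁻¹ • !![1, 1; 1, -1]
/-- Eigenvector matrix of σy (y-basis change). -/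
noncomputable def Vm : Matrix (Fin 2) (Fin 2) ℂ :=
  (Real.sqrt 2 : ℂ)⁻¹ • !![1, 1; Complex.I, -Complex.I]

/-- Robustness of imaginarity in the x-basis. -/
noncomputable def roiX (σ : Matrix (Fin 2) (Fin 2) ℂ) : ℝ := roi (Hm * σ * Hm)
/-- Robustness of imaginarity in the y-basis. -/
noncomputable def roiY (σ : Matrix (Fin 2) (Fin 2) ℂ) : ℝ := roi (Vmᴴ * σ * Vm)
noncomputable def n1 (ρ : Matrix (Fin 2 × Fin 2) (Fin 2 × Fin 2) ℂ) : ℝ :=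
  ((((1 : Matrix (Fin 2) (Fin 2) ℂ) ⊗ₖ σx) * ρ).trace).re
noncomputable def n2 (ρ : Matrix (Fin 2 × Fin 2) (Fin 2 × Fin 2) ℂ) : ℝ :=
  ((((1 : Matrix (Fin 2) (Fin 2) ℂ) ⊗ₖ σy) * ρ).trace).re
noncomputable def t11 (ρ : Matrix (Fin 2 × Fin 2) (Fin 2 × Fin 2) ℂ) : ℝ :=
  (((σx ⊗ₖ σx) * ρ).trace).re
noncomputable def t22 (ρ : Matrix (Fin 2 × Fin 2) (Fin 2 × Fin 2) ℂ) : ℝ :=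
  (((σy ⊗ₖ σy) * ρ).trace).re

/-- The imaginarity steering functional. -/
noncomputable def I2 (ρ : Matrix (Fin 2 × Fin 2) (Fin 2 × Fin 2) ℂ) : ℝ :=
  (1 / 2) * (|n1 ρ - t11 ρ| + |n1 ρ + t11 ρ| + |n2 ρ - t22 ρ| + |n2 ρ + t22 ρ|)

/-- The function `h(C)` of the MEMS family. -/
noncomputable def hMEMS (C : ℝ) : ℝ := if C < 2 / 3 then 1 / 3 else C / 2

/-- The maximally entangled mixed state with concurrence parameter `C`:
diagonal `(h(C), 1−2h(C), 0, h(C))` and anti-diagonal corners `C/2`. -/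
noncomputable def memsState (C : ℝ) : Matrix (Fin 2 × Fin 2) (Fin 2 × Fin 2) ℂ :=
  Matrix.of fun p q =>
    if p = ((0 : Fin 2), (0 : Fin 2)) ∧ q = ((0 : Fin 2), (0 : Fin 2)) then
      (hMEMS C : ℂ)
    else if p = ((0 : Fin 2), (1 : Fin 2)) ∧ q = ((0 : Fin 2), (1 : Fin 2)) then
      ((1 - 2 * hMEMS C : ℝ) : ℂ)
    else if p = ((1 : Fin 2), (1 : Fin 2)) ∧ q = ((1 : Fin 2), (1 : Fin 2)) then
      (hMEMS C : ℂ)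
    else if p = ((0 : Fin 2), (0 : Fin 2)) ∧ q = ((1 : Fin 2), (1 : Fin 2)) then
      ((C / 2 : ℝ) : ℂ)
    else if p = ((1 : Fin 2), (1 : Fin 2)) ∧ q = ((0 : Fin 2), (0 : Fin 2)) then
      ((C / 2 : ℝ) : ℂ)
    else 0

/-- the MEMS satisfies `I₂(ρ_MEMS) = 2C`, so it violates the
imaginarity steering inequality iff `C > 1/√2`. -/
theorem stmt18 (C : ℝ) (hC0 : 0 ≤ C) (hC1 : C ≤ 1) :
    I2 (memsState C) = 2 * C ∧
      (Real.sqrt 2 < I2 (memsState C) ↔ 1 / Real.sqrt 2 < C) := by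
  have hn1 : n1 (memsState C) = 0 := by
    simp [n1, memsState, Matrix.trace, Matrix.mul_apply, Fintype.sum_prod_type,
      Fin.sum_univ_succ, σx, Matrix.one_apply, Prod.ext_iff]
  have hn2 : n2 (memsState C) = 0 := by
    simp [n2, memsState, Matrix.trace, Matrix.mul_apply, Fintype.sum_prod_type,
      Fin.sum_univ_succ, σy, Matrix.one_apply, Prod.ext_iff]
  have ht11 : t11 (memsState C) = C := by
    simp [t11, memsState, Matrix.trace, Matrix.mul_apply, Fintype.sum_prod_type,
      Fin.sum_univ_succ, σx, Prod.ext_iff]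
  have ht22 : t22 (memsState C) = -C := by
    simp [t22, memsState, Matrix.trace, Matrix.mul_apply, Fintype.sum_prod_type,
      Fin.sum_univ_succ, σy, Prod.ext_iff]
    ring
  have hI : I2 (memsState C) = 2 * C := by
    rw [I2, hn1, hn2, ht11, ht22]
    simp [abs_of_nonneg hC0]
    ring
  refine ⟨hI, ?_⟩
  rw [hI]
  have hsq : (1 : ℝ) / Real.sqrt 2 = Real.sqrt 2 / 2 := by
    rw [div_eq_div_iff (by positivity) (by norm_num), one_mul,
      Real.mul_self_sqrt (by norm_num)]
  rw [hsq]
  constructor <;> intro h <;> linarith
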